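/- Under the vertical symmetry condition, the 2-form B̃ := B̃₁ + 𝓑̃ on T*Q̃ defines a dynamical gauge transformation of the partially reduced nonholonomic system (T*Q̃, Ω̃, H̃): B̃ is semi-basic with respect to the bundle T*Q̃ → Q̃ and i_{X̃_nh} B̃ = 0. Consequently the partially reduced dynamics is also given by i_{X̃_nh}(Ω̃ + B̃) = dH̃. -/
import Mathlib


/-!
STATEMENT 8.  Under the vertical symmetry condition, the 2-form `B̃ = B̃₁ + 𝓑̃` on
`T*Q̃` defines a dynamical gauge transformation of the partially reduced
nonholonomic system `(T*Q̃, Ω̃, H̃)`: `B̃` is semi-basic with respect to the bundle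
`T*Q̃ → Q̃` and `i_{X̃_nh} B̃ = 0`.  Consequently the partially reduced dynamics is
also given by `i_{X̃_nh}(Ω̃ + B̃) = dH̃`.

Abstract model: `M` (with `τ_M : M → Q`) carries the 2-form `B = B₁ + 𝓑`, which
is semi-basic over `Q` and annihilates `X_nh`; `Mt ≅ T*Q̃` (with `τ̃ : T*Q̃ → Q̃`)
carries the descended 2-form `B̃` (with `ρ_{G_W}^* B̃ = B`), the Chaplygin
almost symplectic form `Ω̃ = Ω_Q̃ − B_⟨JK⟩` and the partially reduced dynamics
`X̃_nh = Tρ_{G_W}(X_nh)`, which satisfies `i_{X̃_nh} Ω̃ = dH̃`.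
-/

theorem statement8
    {M Q Mt Qt TM TMt E Et : Type*}
    [AddCommGroup TM] [Module ℝ TM] [AddCommGroup TMt] [Module ℝ TMt]
    [AddCommGroup E] [Module ℝ E] [AddCommGroup Et] [Module ℝ Et]
    -- bundle projections τ_M : M → Q, τ̃ : T*Q̃ → Q̃ and their tangent maps
    (τ : M → Q) (τt : Mt → Qt)
    (Tτ : M → TM →ₗ[ℝ] E) (Tτt : Mt → TMt →ₗ[ℝ] Et)
    -- the orbit projections ρ_{G_W} : M → T*Q̃ and π_Q : Q → Q̃
    (ρGW : M → Mt) (hρ : Function.Surjective ρGW)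
    (πQ : Q → Qt) (TπQ : Q → E →ₗ[ℝ] Et)
    (TρGW : M → TM →ₗ[ℝ] TMt) (hTρ : ∀ m, Function.Surjective (TρGW m))
    (hcomm : ∀ m : M, τt (ρGW m) = πQ (τ m))
    (hTcomm : ∀ (m : M) (v : TM), Tτt (ρGW m) (TρGW m v) = TπQ (τ m) (Tτ m v))
    -- vertical vectors for τ̃ lift to vertical vectors for τ_M modulo Ker Tρ_{G_W}
    (hlift : ∀ (m : M) (v : TM), TπQ (τ m) (Tτ m v) = 0 →
      ∃ v' : TM, Tτ m v' = 0 ∧ TρGW m v' = TρGW m v)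
    -- the 2-form B = B₁ + 𝓑 on M: semi-basic over Q and with i_{X_nh} B = 0
    (B : M → TM →ₗ[ℝ] TM →ₗ[ℝ] ℝ)
    (hBsb : ∀ (m : M) (v w : TM), Tτ m v = 0 → B m v w = 0 ∧ B m w v = 0)
    (Xnh : (m : M) → TM)
    (hBdyn : ∀ (m : M) (w : TM), B m (Xnh m) w = 0)
    -- the descended 2-form B̃ = B̃₁ + 𝓑̃ on T*Q̃, with ρ_{G_W}^* B̃ = B
    (Bt : Mt → TMt →ₗ[ℝ] TMt →ₗ[ℝ] ℝ)
    (hBt : ∀ (m : M) (v w : TM), Bt (ρGW m) (TρGW m v) (TρGW m w) = B m v w)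
    -- the partially reduced dynamics X̃_nh = Tρ_{G_W}(X_nh)
    (Xnht : (α : Mt) → TMt) (hXnht : ∀ m : M, Xnht (ρGW m) = TρGW m (Xnh m))
    -- the Chaplygin 2-form Ω̃ = Ω_Q̃ − B_⟨JK⟩ and the hamiltonian H̃ on T*Q̃,
    -- with i_{X̃_nh} Ω̃ = dH̃
    (Ωt : Mt → TMt →ₗ[ℝ] TMt →ₗ[ℝ] ℝ)
    (Ht : Mt → ℝ) (dHt : Mt → TMt →ₗ[ℝ] ℝ)
    (hdyn : ∀ (α : Mt) (w : TMt), Ωt α (Xnht α) w = dHt α w) :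
    -- B̃ is semi-basic with respect to T*Q̃ → Q̃:
    (∀ (α : Mt) (v w : TMt), Tτt α v = 0 → Bt α v w = 0 ∧ Bt α w v = 0) ∧
    -- B̃ satisfies the dynamical condition i_{X̃_nh} B̃ = 0:
    (∀ (α : Mt) (w : TMt), Bt α (Xnht α) w = 0) ∧
    -- consequently i_{X̃_nh}(Ω̃ + B̃) = dH̃:
    (∀ (α : Mt) (w : TMt), Ωt α (Xnht α) w + Bt α (Xnht α) w = dHt α w) := by
  have hsb : ∀ (α : Mt) (v w : TMt), Tτt α v = 0 → Bt α v w = 0 ∧ Bt α w v = 0 := by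
    intro α v w hv
    obtain ⟨m, rfl⟩ := hρ α
    obtain ⟨v₀, rfl⟩ := hTρ m v
    obtain ⟨w₀, rfl⟩ := hTρ m w
    have h0 : TπQ (τ m) (Tτ m v₀) = 0 := by rw [← hTcomm]; exact hv
    obtain ⟨v', hv', hveq⟩ := hlift m v₀ h0
    have h1 := hBsb m v' w₀ hv'
    constructor
    · rw [← hveq, hBt]; exact h1.1
    · rw [← hveq, hBt]; exact h1.2
  have hdynB : ∀ (α : Mt) (w : TMt), Bt α (Xnht α) w = 0 := by
    intro α w
    obtain ⟨m, rfl⟩ := hρ α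
    obtain ⟨w₀, rfl⟩ := hTρ m w
    rw [hXnht, hBt]
    exact hBdyn m w₀
  refine ⟨hsb, hdynB, fun α w => ?_⟩
  rw [hdynB, add_zero, hdyn]
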